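/- Let X be a compact metric space, K ⊆ M(X) the convex hull of Dirac measures δ_{x_𝐢} at finitely many distinct points x_𝐢 indexed by 𝐢 ∈ {1,…,k}^J for a finite index set J, and Ξ: Δ_k^J → K ⊆ M(X) the composition of the multi-affine embedding Θ with the affine parametrization t ↦ Σ_𝐢 t_𝐢 δ_{x_𝐢}. Then for any face F of Δ_k, any i ∈ J, and any μ = Ξ(t) ∈ Ξ(Δ_k^J), there exist λ ∈ [0,1], μ' ∈ Ξ(F_i), μ'' ∈ Ξ(F̄_i) with μ = λ μ' + (1−λ) μ'', λ = μ(S_{Ξ(F_i)}) and 1−λ = μ(S_{Ξ(F̄_i)}), where S_E = ∪_{ν∈E} supp(ν). -/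

import Mathlib

open MeasureTheory
open scoped Classical

/-- The (closed) support of a measure: points all of whose neighborhoods have
positive measure. -/
def mSupport {X : Type*} [TopologicalSpace X] [MeasurableSpace X] (μ : Measure X) :
    Set X := {p | ∀ U : Set X, IsOpen U → p ∈ U → 0 < μ U}

/-- The face of the simplex `Δ_k` with index set `I`. -/
def simplexFace (k : ℕ) (I : Finset (Fin k)) : Set (Fin k → ℝ) :=
  {t ∈ stdSimplex ℝ (Fin k) | ∀ j ∉ I, t j = 0}

variable {X : Type*} [MetricSpace X] [CompactSpace X] [MeasurableSpace X] [BorelSpace X]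
variable {J : Type*} [Fintype J] [DecidableEq J]

/-- The multi-affine parametrization `Ξ(t) = Σ_𝐢 (∏_m t_{m,i_m}) δ_{x_𝐢}`. -/
noncomputable def Xi (k : ℕ) (x : (J → Fin k) → X) (t : J → Fin k → ℝ) : Measure X :=
  ∑ ii : J → Fin k, ENNReal.ofReal (∏ m : J, t m (ii m)) • Measure.dirac (x ii)

/-- The cube face `F_i ⊆ Δ_k^J` determined by a face `I` of `Δ_k` at coordinate `i`. -/
def cubeFaceSet (k : ℕ) (I : Finset (Fin k)) (i : J) : Set (J → Fin k → ℝ) :=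
  {t | (∀ m : J, t m ∈ stdSimplex ℝ (Fin k)) ∧ t i ∈ simplexFace k I}

/-- `S_E`: the union of the supports of the measures `Ξ(t)`, `t ∈ s`. -/
def suppUnion (k : ℕ) (x : (J → Fin k) → X) (s : Set (J → Fin k → ℝ)) : Set X :=
  ⋃ t ∈ s, mSupport (Xi k x t)

/-- `Xi` applied to any set, as a finite sum of indicator terms. -/
lemma Xi_apply (k : ℕ) (x : (J → Fin k) → X) (s : J → Fin k → ℝ) (S : Set X) :
    Xi k x s S = ∑ ii : J → Fin k,
      ENNReal.ofReal (∏ m : J, s m (ii m)) * (if x ii ∈ S then 1 else 0) := by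
  rw [Xi, Measure.finset_sum_apply]
  refine Finset.sum_congr rfl fun ii _ => ?_
  rw [Measure.smul_apply, Measure.dirac_apply, smul_eq_mul]
  by_cases h : x ii ∈ S <;> simp [Set.indicator, h]

/-- Points with positive coefficient are in the support of `Xi`. -/
lemma mem_mSupport_Xi (k : ℕ) (x : (J → Fin k) → X) (s : J → Fin k → ℝ)
    (ii : J → Fin k) (h : 0 < ∏ m : J, s m (ii m)) :
    x ii ∈ mSupport (Xi k x s) := by
  intro U hU hpU
  have h1 : ENNReal.ofReal (∏ m : J, s m (ii m)) * (if x ii ∈ U then 1 else 0)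
      ≤ Xi k x s U := by
    rw [Xi_apply]
    exact Finset.single_le_sum (f := fun jj : J → Fin k =>
      ENNReal.ofReal (∏ m : J, s m (jj m)) * (if x jj ∈ U then 1 else 0))
      (fun _ _ => zero_le) (Finset.mem_univ ii)
  calc (0 : ENNReal) < ENNReal.ofReal (∏ m : J, s m (ii m)) * (if x ii ∈ U then 1 else 0) := by
        simp [hpU, ENNReal.ofReal_pos.2 h]
    _ ≤ Xi k x s U := h1

/-- The support of `Xi` is contained in the points with positive coefficient. -/
lemma mSupport_Xi_subset (k : ℕ) (x : (J → Fin k) → X) (s : J → Fin k → ℝ) :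
    mSupport (Xi k x s) ⊆ x '' {ii | 0 < ∏ m : J, s m (ii m)} := by
  intro p hp
  by_contra hpn
  set A : Set X := x '' {ii | 0 < ∏ m : J, s m (ii m)} with hA
  have hAfin : A.Finite := Set.Finite.image _ (Set.toFinite _)
  have hU : IsOpen Aᶜ := hAfin.isClosed.isOpen_compl
  have h0 : Xi k x s Aᶜ = 0 := by
    rw [Xi_apply]
    refine Finset.sum_eq_zero fun ii _ => ?_
    by_cases hpos : 0 < ∏ m : J, s m (ii m)
    · have : x ii ∈ A := Set.mem_image_of_mem x hpos
      simp [this]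
    · have : ENNReal.ofReal (∏ m : J, s m (ii m)) = 0 :=
        ENNReal.ofReal_eq_zero.2 (le_of_not_gt hpos)
      simp [this]
  have := hp Aᶜ hU hpn
  rw [h0] at this
  exact lt_irrefl 0 this

/-- The union of supports of measures on a cube face is exactly the points indexed by the face. -/
lemma suppUnion_cubeFace (k : ℕ) (x : (J → Fin k) → X) (hx : Function.Injective x)
    (I : Finset (Fin k)) (i : J) :
    suppUnion k x (cubeFaceSet k I i) = x '' {ii | ii i ∈ I} := by
  apply Set.Subset.antisymm
  · intro p hp
    rw [suppUnion, Set.mem_iUnion₂] at hp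
    obtain ⟨s, hs, hps⟩ := hp
    obtain ⟨ii, hii, rfl⟩ := mSupport_Xi_subset k x s hps
    refine ⟨ii, ?_, rfl⟩
    by_contra hiiI
    have : s i (ii i) = 0 := hs.2.2 (ii i) hiiI
    have : (∏ m : J, s m (ii m)) = 0 :=
      Finset.prod_eq_zero (Finset.mem_univ i) this
    have hii' : 0 < ∏ m : J, s m (ii m) := hii
    rw [this] at hii'
    exact lt_irrefl 0 hii'
  · rintro p ⟨ii, hii, rfl⟩
    set s : J → Fin k → ℝ := fun m j => if j = ii m then 1 else 0 with hs
    have hsface : s ∈ cubeFaceSet k I i := by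
      have hstd : ∀ m : J, s m ∈ stdSimplex ℝ (Fin k) := by
        intro m
        constructor
        · intro j; simp only [hs]; split <;> norm_num
        · simp [hs]
      refine ⟨hstd, hstd i, fun j hj => ?_⟩
      have : j ≠ ii i := fun h => hj (h ▸ hii)
      simp [hs, this]
    have hprod : 0 < ∏ m : J, s m (ii m) := by
      have : ∀ m : J, s m (ii m) = 1 := fun m => by simp [hs]
      simp [this]
    rw [suppUnion, Set.mem_iUnion₂]
    exact ⟨s, hsface, mem_mSupport_Xi k x s ii hprod⟩

/-- Key combinatorial identity: the sum of product coefficients over the indices whose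
`i`-th component lies in `I'` equals the corresponding partial sum of `t i`. -/
lemma sum_prod_restrict (k : ℕ) (t : J → Fin k → ℝ)
    (ht : ∀ m : J, t m ∈ stdSimplex ℝ (Fin k)) (I' : Finset (Fin k)) (i : J) :
    (∑ ii : J → Fin k, if ii i ∈ I' then ∏ m : J, t m (ii m) else 0) = ∑ j ∈ I', t i j := by
  set f : J → Fin k → ℝ := fun m j => if m = i then (if j ∈ I' then t i j else 0) else t m j
    with hf
  have key : ∏ m : J, ∑ j : Fin k, f m j = ∑ ii : J → Fin k, ∏ m : J, f m (ii m) :=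
    Fintype.prod_sum f
  have h1 : ∀ m : J, (∑ j : Fin k, f m j) = if m = i then ∑ j ∈ I', t i j else 1 := by
    intro m
    by_cases hm : m = i
    · subst hm
      simp only [hf, if_pos rfl]
      rw [Finset.sum_ite_mem, Finset.univ_inter]
      simp
    · simp only [hf, if_neg hm]
      exact (ht m).2
  have h2 : (∏ m : J, ∑ j : Fin k, f m j) = ∑ j ∈ I', t i j := by
    rw [Finset.prod_congr rfl fun m _ => h1 m, Finset.prod_ite_eq' Finset.univ i
      (fun _ => ∑ j ∈ I', t i j)]
    simp
  have h3 : ∀ ii : J → Fin k, (∏ m : J, f m (ii m))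
      = if ii i ∈ I' then ∏ m : J, t m (ii m) else 0 := by
    intro ii
    by_cases hii : ii i ∈ I'
    · rw [if_pos hii]
      refine Finset.prod_congr rfl fun m _ => ?_
      by_cases hm : m = i
      · subst hm; simp [hf, hii]
      · simp [hf, hm]
    · rw [if_neg hii]
      refine Finset.prod_eq_zero (Finset.mem_univ i) ?_
      simp [hf, hii]
  rw [← h2, key]
  exact Finset.sum_congr rfl fun ii _ => (h3 ii).symm

/-- The measure of the union of face supports equals `ofReal` of the partial sum. -/
lemma Xi_suppUnion_eq (k : ℕ) (x : (J → Fin k) → X) (hx : Function.Injective x)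
    (t : J → Fin k → ℝ) (ht : ∀ m : J, t m ∈ stdSimplex ℝ (Fin k))
    (I' : Finset (Fin k)) (i : J) :
    Xi k x t (suppUnion k x (cubeFaceSet k I' i)) = ENNReal.ofReal (∑ j ∈ I', t i j) := by
  rw [suppUnion_cubeFace k x hx I' i, Xi_apply]
  have hmem : ∀ ii : J → Fin k, (x ii ∈ x '' {jj | jj i ∈ I'}) ↔ ii i ∈ I' := by
    intro ii
    constructor
    · rintro ⟨jj, hjj, hj⟩
      rwa [← hx hj]
    · intro h; exact ⟨ii, h, rfl⟩
  have : ∀ ii : J → Fin k,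
      ENNReal.ofReal (∏ m : J, t m (ii m)) * (if x ii ∈ x '' {jj | jj i ∈ I'} then 1 else 0)
      = ENNReal.ofReal (if ii i ∈ I' then ∏ m : J, t m (ii m) else 0) := by
    intro ii
    by_cases h : ii i ∈ I' <;> simp [hmem ii, h]
  rw [Finset.sum_congr rfl fun ii _ => this ii,
    ← ENNReal.ofReal_sum_of_nonneg, sum_prod_restrict k t ht I' i]
  intro ii _
  split
  · exact Finset.prod_nonneg fun m _ => (ht m).1 (ii m)
  · exact le_refl 0

/-- Decomposition of measures in the image of `Ξ` along a cube face and its opposite,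
with coefficient given by the measure of the union of supports. -/
theorem xi_face_decomposition (k : ℕ) (hk : 1 ≤ k)
    (x : (J → Fin k) → X) (hx : Function.Injective x)
    (t : J → Fin k → ℝ) (ht : ∀ m : J, t m ∈ stdSimplex ℝ (Fin k))
    (I : Finset (Fin k)) (hI : I.Nonempty) (hIc : Iᶜ.Nonempty) (i : J) :
    ∃ lam ∈ Set.Icc (0 : ℝ) 1, ∃ t' ∈ cubeFaceSet (J := J) k I i,
      ∃ t'' ∈ cubeFaceSet (J := J) k Iᶜ i,
      Xi k x t = ENNReal.ofReal lam • Xi k x t'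
          + ENNReal.ofReal (1 - lam) • Xi k x t'' ∧
      Xi k x t (suppUnion k x (cubeFaceSet k I i)) = ENNReal.ofReal lam ∧
      Xi k x t (suppUnion k x (cubeFaceSet k Iᶜ i)) = ENNReal.ofReal (1 - lam) := by
  set lam : ℝ := ∑ j ∈ I, t i j with hlam_def
  have hsum1 : (∑ j ∈ I, t i j) + (∑ j ∈ Iᶜ, t i j) = 1 := by
    rw [Finset.sum_add_sum_compl]
    exact (ht i).2
  have hlam0 : 0 ≤ lam := Finset.sum_nonneg fun j _ => (ht i).1 j
  have hlamc0 : 0 ≤ ∑ j ∈ Iᶜ, t i j := Finset.sum_nonneg fun j _ => (ht i).1 j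
  have hlamc : (∑ j ∈ Iᶜ, t i j) = 1 - lam := by linarith
  have hlam1 : lam ≤ 1 := by linarith
  obtain ⟨j0, hj0⟩ := hI
  obtain ⟨j1, hj1⟩ := hIc
  -- the face components
  set ti' : Fin k → ℝ :=
    if lam = 0 then (fun j => if j = j0 then 1 else 0)
    else fun j => if j ∈ I then t i j / lam else 0 with hti'
  set ti'' : Fin k → ℝ :=
    if 1 - lam = 0 then (fun j => if j = j1 then 1 else 0)
    else fun j => if j ∈ Iᶜ then t i j / (1 - lam) else 0 with hti''
  set t' : J → Fin k → ℝ := Function.update t i ti' with ht'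
  set t'' : J → Fin k → ℝ := Function.update t i ti'' with ht''
  -- generic fact: such components lie in the simplex face
  have face_mem : ∀ (I₀ : Finset (Fin k)) (j₀ : Fin k), j₀ ∈ I₀ →
      ∀ (c : ℝ), 0 ≤ c → (∑ j ∈ I₀, t i j) = c →
      (if c = 0 then (fun j => if j = j₀ then 1 else 0)
        else fun j => if j ∈ I₀ then t i j / c else 0) ∈ simplexFace k I₀ := by
    intro I₀ j₀ hj₀ c hc hsc
    by_cases hc0 : c = 0
    · rw [if_pos hc0]
      refine ⟨⟨fun j => ?_, ?_⟩, fun j hj => ?_⟩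
      · by_cases h : j = j₀ <;> simp [h]
      · simp
      · have : j ≠ j₀ := fun h => hj (h ▸ hj₀)
        simp [this]
    · rw [if_neg hc0]
      refine ⟨⟨fun j => ?_, ?_⟩, fun j hj => ?_⟩
      · by_cases h : j ∈ I₀ <;> simp [h, div_nonneg ((ht i).1 j) hc]
      · show (∑ j : Fin k, if j ∈ I₀ then t i j / c else 0) = 1
        rw [Finset.sum_ite_mem, Finset.univ_inter, ← Finset.sum_div, hsc,
          div_self hc0]
      · simp [hj]
    -- done
  have hti'_mem : ti' ∈ simplexFace k I := face_mem I j0 hj0 lam hlam0 rfl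
  have hti''_mem : ti'' ∈ simplexFace k Iᶜ := by
    have := face_mem Iᶜ j1 hj1 (1 - lam) (by linarith) hlamc
    rwa [hti'']
  have ht'_mem : t' ∈ cubeFaceSet k I i := by
    refine ⟨fun m => ?_, by rw [ht', Function.update_self]; exact hti'_mem⟩
    by_cases hm : m = i
    · subst hm; rw [ht', Function.update_self]; exact hti'_mem.1
    · rw [ht', Function.update_of_ne hm]; exact ht m
  have ht''_mem : t'' ∈ cubeFaceSet k Iᶜ i := by
    refine ⟨fun m => ?_, by rw [ht'', Function.update_self]; exact hti''_mem⟩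
    by_cases hm : m = i
    · subst hm; rw [ht'', Function.update_self]; exact hti''_mem.1
    · rw [ht'', Function.update_of_ne hm]; exact ht m
  -- per-coordinate convexity identity
  have coord : ∀ j : Fin k, t i j = lam * ti' j + (1 - lam) * ti'' j := by
    intro j
    by_cases hj : j ∈ I
    · have h2 : (1 - lam) * ti'' j = 0 := by
        by_cases hc : 1 - lam = 0
        · rw [hc, zero_mul]
        · have : ti'' j = 0 := by
            rw [hti'', if_neg hc]
            simp [hj]
          rw [this, mul_zero]
      rw [h2, add_zero]
      by_cases hc : lam = 0
      · have htj : t i j = 0 := by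
          have hz : (∑ j' ∈ I, t i j') = 0 := by rw [← hlam_def]; exact hc
          exact (Finset.sum_eq_zero_iff_of_nonneg
            (fun j' (_ : j' ∈ I) => (ht i).1 j')).1 hz j hj
        rw [htj, hc, zero_mul]
      · rw [hti', if_neg hc]
        simp only [hj, if_true]
        rw [mul_div_cancel₀ _ hc]
    · have hjc : j ∈ Iᶜ := Finset.mem_compl.2 hj
      have h2 : lam * ti' j = 0 := by
        by_cases hc : lam = 0
        · rw [hc, zero_mul]
        · have : ti' j = 0 := by
            rw [hti', if_neg hc]
            simp [hj]
          rw [this, mul_zero]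
      rw [h2, zero_add]
      by_cases hc : 1 - lam = 0
      · have htj : t i j = 0 := by
          have hz : (∑ j' ∈ Iᶜ, t i j') = 0 := by rw [hlamc, hc]
          exact (Finset.sum_eq_zero_iff_of_nonneg
            (fun j' (_ : j' ∈ Iᶜ) => (ht i).1 j')).1 hz j hjc
        rw [htj, hc, zero_mul]
      · rw [hti'', if_neg hc]
        simp only [hjc, if_true]
        rw [mul_div_cancel₀ _ hc]
  -- coefficient identity for each index
  have coeff : ∀ ii : J → Fin k,
      (∏ m : J, t m (ii m)) = lam * (∏ m : J, t' m (ii m))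
        + (1 - lam) * (∏ m : J, t'' m (ii m)) := by
    intro ii
    have hsplit : ∀ (s : J → Fin k → ℝ), (∏ m : J, s m (ii m))
        = s i (ii i) * ∏ m ∈ Finset.univ.erase i, s m (ii m) := fun s =>
      (Finset.mul_prod_erase Finset.univ (fun m => s m (ii m)) (Finset.mem_univ i)).symm
    have herase : ∀ (s : J → Fin k → ℝ), s = Function.update t i (s i) →
        (∏ m ∈ Finset.univ.erase i, s m (ii m)) = ∏ m ∈ Finset.univ.erase i, t m (ii m) := by
      intro s hs
      refine Finset.prod_congr rfl fun m hm => ?_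
      have hmi : m ≠ i := (Finset.mem_erase.1 hm).1
      rw [hs, Function.update_of_ne hmi]
    have e' : (∏ m ∈ Finset.univ.erase i, t' m (ii m))
        = ∏ m ∈ Finset.univ.erase i, t m (ii m) := by
      refine Finset.prod_congr rfl fun m hm => ?_
      have hmi : m ≠ i := (Finset.mem_erase.1 hm).1
      rw [ht', Function.update_of_ne hmi]
    have e'' : (∏ m ∈ Finset.univ.erase i, t'' m (ii m))
        = ∏ m ∈ Finset.univ.erase i, t m (ii m) := by
      refine Finset.prod_congr rfl fun m hm => ?_
      have hmi : m ≠ i := (Finset.mem_erase.1 hm).1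
      rw [ht'', Function.update_of_ne hmi]
    rw [hsplit t, hsplit t', hsplit t'', e', e'']
    have ht'i : t' i (ii i) = ti' (ii i) := by rw [ht', Function.update_self]
    have ht''i : t'' i (ii i) = ti'' (ii i) := by rw [ht'', Function.update_self]
    rw [ht'i, ht''i, coord (ii i)]
    ring
  -- nonnegativity of products
  have hnn : ∀ (s : J → Fin k → ℝ), (∀ m, s m ∈ stdSimplex ℝ (Fin k)) →
      ∀ ii : J → Fin k, 0 ≤ ∏ m : J, s m (ii m) := fun s hs ii =>
    Finset.prod_nonneg fun m _ => (hs m).1 (ii m)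
  refine ⟨lam, ⟨hlam0, hlam1⟩, t', ht'_mem, t'', ht''_mem, ?_, ?_, ?_⟩
  · -- measure decomposition
    rw [Xi, Xi, Xi, Finset.smul_sum, Finset.smul_sum, ← Finset.sum_add_distrib]
    refine Finset.sum_congr rfl fun ii _ => ?_
    rw [smul_smul, smul_smul, ← add_smul]
    congr 1
    rw [← ENNReal.ofReal_mul hlam0, ← ENNReal.ofReal_mul (by linarith : (0:ℝ) ≤ 1 - lam),
      ← ENNReal.ofReal_add (mul_nonneg hlam0 (hnn t' ht'_mem.1 ii))
        (mul_nonneg (by linarith) (hnn t'' ht''_mem.1 ii)), coeff ii]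
  · rw [Xi_suppUnion_eq k x hx t ht I i]
  · rw [Xi_suppUnion_eq k x hx t ht Iᶜ i, hlamc]
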